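/- Let f ∈ ℝⁿ with f ≠ a, and set S = 2 max_{1≤i≤n} |f_i − a_i| > 0 and ψ(u) = e^u − u − 1. Then ‖f − a‖_ñ² · ψ(−S)/S² ≤ KL_n(a, f) ≤ ‖f − a‖_ñ² · ψ(S)/S². -/

import Mathlib

open MeasureTheory

noncomputable section

/-- `S⁰(f,t) = Σᵢ Yᵢ(t) e^{fᵢ}` with `Yᵢ(t) = 1(zᵢ ≥ t)`. -/
def S0 {n : ℕ} (z f : Fin n → ℝ) (t : ℝ) : ℝ :=
  ∑ i, if t ≤ z i then Real.exp (f i) else 0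

/-- The empirical Kullback–Leibler divergence. -/
def KLn {n : ℕ} (τ : ℝ) (z a : Fin n → ℝ) (lam : ℝ → ℝ)
    (f : Fin n → ℝ) : ℝ :=
  (1 / (n : ℝ)) * ∑ i, ∫ t in (0 : ℝ)..τ,
    Real.log (Real.exp (a i) * S0 z f t / (Real.exp (f i) * S0 z a t)) *
      (if t ≤ z i then (1 : ℝ) else 0) * lam t * Real.exp (a i)

/-- The compensated mean `ḡ(t) = Σᵢ gᵢ Yᵢ(t) e^{aᵢ} / S⁰(a,t)` (`0` when
`S⁰(a,t) = 0`). -/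
def barG {n : ℕ} (z a : Fin n → ℝ) (g : Fin n → ℝ) (t : ℝ) : ℝ :=
  if S0 z a t = 0 then 0
  else (∑ i, g i * (if t ≤ z i then (1 : ℝ) else 0) * Real.exp (a i)) / S0 z a t

/-- The compensated empirical squared seminorm
`‖g‖ñ² = (1/n) ∫₀^τ Σᵢ (gᵢ − ḡ(t))² Yᵢ(t) e^{aᵢ} λ₀(t) dt`. -/
def normSqN {n : ℕ} (τ : ℝ) (z a : Fin n → ℝ) (lam : ℝ → ℝ)
    (g : Fin n → ℝ) : ℝ :=
  (1 / (n : ℝ)) * ∫ t in (0 : ℝ)..τ,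
    (∑ i, (g i - barG z a g t) ^ 2 * (if t ≤ z i then (1 : ℝ) else 0) *
      Real.exp (a i)) * lam t

end

namespace KLAux

/-- helper: `f 0 ≤ f s` when the derivative is nonneg on `[0,∞)`. -/
lemma mono_aux {f f' : ℝ → ℝ} (hf : ∀ x, HasDerivAt f (f' x) x)
    (h0 : ∀ x, 0 ≤ x → 0 ≤ f' x) {s : ℝ} (hs : 0 ≤ s) : f 0 ≤ f s := by
  have hm : MonotoneOn f (Set.Ici (0:ℝ)) := by
    apply monotoneOn_of_deriv_nonneg (convex_Ici 0)
      (fun x _ => (hf x).continuousAt.continuousWithinAt)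
      (fun x _ => (hf x).differentiableAt.differentiableWithinAt)
    intro x hx
    rw [interior_Ici] at hx
    rw [(hf x).deriv]
    exact h0 x (le_of_lt hx)
  exact hm Set.self_mem_Ici hs hs

lemma anti_aux {f f' : ℝ → ℝ} (hf : ∀ x, HasDerivAt f (f' x) x)
    (h0 : ∀ x, 0 ≤ x → f' x ≤ 0) {s : ℝ} (hs : 0 ≤ s) : f s ≤ f 0 := by
  have := mono_aux (f := fun x => -f x) (f' := fun x => -(f' x))
    (fun x => (hf x).neg) (fun x hx => neg_nonneg.mpr (h0 x hx)) hs
  simpa using this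

variable {n : ℕ} (w g : Fin n → ℝ)

/-- `Nk w g k s = ∑ i, w i * g i ^ k * exp (s * g i)` -/
noncomputable def Nk (k : ℕ) (s : ℝ) : ℝ := ∑ i, w i * g i ^ k * Real.exp (s * g i)

lemma hasDerivAt_Nk (k : ℕ) (s : ℝ) :
    HasDerivAt (Nk w g k) (Nk w g (k+1) s) s := by
  apply HasDerivAt.fun_sum
  intro i _
  have h1 : HasDerivAt (fun s : ℝ => s * g i) (g i) s := hasDerivAt_mul_const _
  have h2 := (Real.hasDerivAt_exp (s * g i)).comp s h1
  have h3 := h2.const_mul (w i * g i ^ k)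
  refine h3.congr_deriv ?_
  rw [pow_succ]; ring

lemma Nk_pos (hw : ∀ i, 0 ≤ w i) (hW : 0 < ∑ i, w i) (s : ℝ) :
    0 < Nk w g 0 s := by
  obtain ⟨j, -, hj⟩ : ∃ j ∈ Finset.univ, 0 < w j := by
    by_contra h
    push_neg at h
    have : ∑ i, w i ≤ 0 := Finset.sum_nonpos (fun i hi => h i hi)
    linarith
  refine Finset.sum_pos' (fun i _ => ?_) ⟨j, Finset.mem_univ j, ?_⟩
  · have := hw i
    positivity
  · simp only [pow_zero, mul_one]
    exact mul_pos hj (Real.exp_pos _)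


/-- `F s = log N0 s`. -/
noncomputable def F (s : ℝ) : ℝ := Real.log (Nk w g 0 s)
noncomputable def F1 (s : ℝ) : ℝ := Nk w g 1 s / Nk w g 0 s
noncomputable def F2 (s : ℝ) : ℝ :=
  Nk w g 2 s / Nk w g 0 s - (Nk w g 1 s / Nk w g 0 s) ^ 2
noncomputable def F3 (s : ℝ) : ℝ :=
  Nk w g 3 s / Nk w g 0 s - 3 * (Nk w g 2 s / Nk w g 0 s) * (Nk w g 1 s / Nk w g 0 s)
    + 2 * (Nk w g 1 s / Nk w g 0 s) ^ 3

variable (hw : ∀ i, 0 ≤ w i) (hW : 0 < ∑ i, w i)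
include hw hW

lemma hasDerivAt_F (s : ℝ) : HasDerivAt (F w g) (F1 w g s) s := by
  have h0 := Nk_pos w g hw hW s
  have h := (Real.hasDerivAt_log h0.ne').comp s (hasDerivAt_Nk w g 0 s)
  refine h.congr_deriv ?_
  unfold F1
  field_simp

lemma hasDerivAt_F1 (s : ℝ) : HasDerivAt (F1 w g) (F2 w g s) s := by
  have h0 := Nk_pos w g hw hW s
  have h := (hasDerivAt_Nk w g 1 s).div (hasDerivAt_Nk w g 0 s) h0.ne'
  refine h.congr_deriv ?_
  unfold F2
  field_simp

lemma hasDerivAt_F2 (s : ℝ) : HasDerivAt (F2 w g) (F3 w g s) s := by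
  have h0 := Nk_pos w g hw hW s
  have h1 := (hasDerivAt_Nk w g 2 s).div (hasDerivAt_Nk w g 0 s) h0.ne'
  have h2 := ((hasDerivAt_Nk w g 1 s).div (hasDerivAt_Nk w g 0 s) h0.ne').pow 2
  have h := h1.sub h2
  refine h.congr_deriv ?_
  unfold F3
  simp only [Pi.div_apply]
  have hne : Nk w g 0 s ≠ 0 := h0.ne'
  norm_num
  field_simp
  ring

lemma F2_mul (s : ℝ) :
    F2 w g s * Nk w g 0 s
      = ∑ i, w i * Real.exp (s * g i) * (g i - F1 w g s) ^ 2 := by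
  have h0 := Nk_pos w g hw hW s
  have key : ∑ i, w i * Real.exp (s * g i) * (g i - F1 w g s) ^ 2
      = Nk w g 2 s - 2 * F1 w g s * Nk w g 1 s + F1 w g s ^ 2 * Nk w g 0 s := by
    unfold Nk
    rw [Finset.mul_sum, Finset.mul_sum, ← Finset.sum_sub_distrib, ← Finset.sum_add_distrib]
    exact Finset.sum_congr rfl fun i _ => by ring
  rw [key]
  unfold F2 F1
  field_simp
  ring

lemma F3_mul (s : ℝ) :
    F3 w g s * Nk w g 0 s
      = ∑ i, w i * Real.exp (s * g i) * (g i - F1 w g s) ^ 3 := by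
  have h0 := Nk_pos w g hw hW s
  have key : ∑ i, w i * Real.exp (s * g i) * (g i - F1 w g s) ^ 3
      = Nk w g 3 s - 3 * F1 w g s * Nk w g 2 s + 3 * F1 w g s ^ 2 * Nk w g 1 s
        - F1 w g s ^ 3 * Nk w g 0 s := by
    unfold Nk
    rw [Finset.mul_sum, Finset.mul_sum, Finset.mul_sum, ← Finset.sum_sub_distrib,
      ← Finset.sum_add_distrib, ← Finset.sum_sub_distrib]
    exact Finset.sum_congr rfl fun i _ => by ring
  rw [key]
  unfold F3 F1
  field_simp
  ring

lemma F2_nonneg (s : ℝ) : 0 ≤ F2 w g s := by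
  have h0 := Nk_pos w g hw hW s
  have h : 0 ≤ F2 w g s * Nk w g 0 s := by
    rw [F2_mul w g hw hW s]
    apply Finset.sum_nonneg
    intro i _
    have := hw i
    positivity
  nlinarith

variable {S : ℝ} (hS : 0 < S) (hg : ∀ i, |g i| ≤ S / 2)
include hS hg

lemma abs_F1_le (s : ℝ) : |F1 w g s| ≤ S / 2 := by
  have h0 := Nk_pos w g hw hW s
  have h1 : |Nk w g 1 s| ≤ S / 2 * Nk w g 0 s := by
    refine (Finset.abs_sum_le_sum_abs _ _).trans ?_
    unfold Nk
    rw [Finset.mul_sum]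
    apply Finset.sum_le_sum
    intro i _
    have e1 : |w i * g i ^ 1 * Real.exp (s * g i)|
        = w i * |g i| * Real.exp (s * g i) := by
      rw [abs_mul, abs_mul, abs_of_nonneg (hw i), abs_of_nonneg (Real.exp_pos _).le,
        pow_one]
    rw [e1]
    have e2 : S / 2 * (w i * g i ^ 0 * Real.exp (s * g i))
        = w i * (S / 2) * Real.exp (s * g i) := by ring
    rw [e2]
    exact mul_le_mul_of_nonneg_right
      (mul_le_mul_of_nonneg_left (hg i) (hw i)) (Real.exp_pos _).le
  rw [F1, abs_div, abs_of_pos h0, div_le_iff₀ h0]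
  exact h1

lemma abs_F3_le (s : ℝ) : |F3 w g s| ≤ S * F2 w g s := by
  have h0 := Nk_pos w g hw hW s
  have hm := abs_F1_le w g hw hW hS hg s
  have h1 : |F3 w g s * Nk w g 0 s| ≤ S * (F2 w g s * Nk w g 0 s) := by
    rw [F3_mul w g hw hW s, F2_mul w g hw hW s, Finset.mul_sum]
    refine (Finset.abs_sum_le_sum_abs _ _).trans ?_
    apply Finset.sum_le_sum
    intro i _
    have hgm : |g i - F1 w g s| ≤ S := by
      have := hg i
      have := abs_sub_abs_le_abs_sub (g i) (F1 w g s)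
      have h3 := abs_sub (g i) (F1 w g s)
      calc |g i - F1 w g s| ≤ |g i| + |F1 w g s| := abs_sub _ _
        _ ≤ S / 2 + S / 2 := add_le_add (hg i) hm
        _ = S := by ring
    have e1 : |w i * Real.exp (s * g i) * (g i - F1 w g s) ^ 3|
        = w i * Real.exp (s * g i) * ((g i - F1 w g s) ^ 2 * |g i - F1 w g s|) := by
      rw [abs_mul, abs_mul, abs_of_nonneg (hw i), abs_of_nonneg (Real.exp_pos _).le]
      congr 1
      rw [pow_succ, abs_mul, abs_pow, sq_abs]
    rw [e1]
    have e2 : S * (w i * Real.exp (s * g i) * (g i - F1 w g s) ^ 2)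
        = w i * Real.exp (s * g i) * ((g i - F1 w g s) ^ 2 * S) := by ring
    rw [e2]
    refine mul_le_mul_of_nonneg_left ?_ (by have := hw i; positivity)
    exact mul_le_mul_of_nonneg_left hgm (sq_nonneg _)
  rw [abs_mul, abs_of_pos h0] at h1
  nlinarith [h1, h0]

lemma gronwall_lower {s : ℝ} (hs : 0 ≤ s) :
    F2 w g 0 * Real.exp (-(S * s)) ≤ F2 w g s := by
  have dexp : ∀ x : ℝ, HasDerivAt (fun t : ℝ => Real.exp (S * t))
      (S * Real.exp (S * x)) x := by
    intro x
    have h1 : HasDerivAt (fun t : ℝ => S * t) S x := by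
      simpa [mul_comm] using (hasDerivAt_id x).const_mul S
    have := (Real.hasDerivAt_exp (S * x)).comp x h1
    refine this.congr_deriv ?_; ring
  have hd : ∀ x : ℝ, HasDerivAt (fun t => F2 w g t * Real.exp (S * t))
      ((F3 w g x + S * F2 w g x) * Real.exp (S * x)) x := by
    intro x
    have := (hasDerivAt_F2 w g hw hW x).mul (dexp x)
    refine this.congr_deriv ?_; ring
  have hmono := mono_aux hd (fun x _ => by
    have h1 := abs_F3_le w g hw hW hS hg x
    have h2 : -(S * F2 w g x) ≤ F3 w g x := by
      have := neg_abs_le (F3 w g x); linarith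
    have := Real.exp_pos (S * x)
    nlinarith) hs
  simp only [mul_zero, Real.exp_zero, mul_one] at hmono
  rw [Real.exp_neg, mul_comm (F2 w g 0), ← div_eq_inv_mul, div_le_iff₀ (Real.exp_pos _)]
  linarith [hmono]

lemma gronwall_upper {s : ℝ} (hs : 0 ≤ s) :
    F2 w g s ≤ F2 w g 0 * Real.exp (S * s) := by
  have dexp : ∀ x : ℝ, HasDerivAt (fun t : ℝ => Real.exp (-(S * t)))
      (-S * Real.exp (-(S * x))) x := by
    intro x
    have h1 : HasDerivAt (fun t : ℝ => -(S * t)) (-S) x := by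
      refine ((hasDerivAt_id x).const_mul S).neg.congr_deriv ?_; ring
    have := (Real.hasDerivAt_exp (-(S * x))).comp x h1
    refine this.congr_deriv ?_; ring
  have hd : ∀ x : ℝ, HasDerivAt (fun t => F2 w g t * Real.exp (-(S * t)))
      ((F3 w g x - S * F2 w g x) * Real.exp (-(S * x))) x := by
    intro x
    have := (hasDerivAt_F2 w g hw hW x).mul (dexp x)
    refine this.congr_deriv ?_; ring
  have hanti := anti_aux hd (fun x _ => by
    have h1 := abs_F3_le w g hw hW hS hg x
    have h2 : F3 w g x ≤ S * F2 w g x := by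
      have := le_abs_self (F3 w g x); linarith
    have := Real.exp_pos (-(S * x))
    nlinarith) hs
  simp only [mul_zero, neg_zero, Real.exp_zero, mul_one] at hanti
  have hpos := Real.exp_pos (S * s)
  have he : Real.exp (-(S * s)) * Real.exp (S * s) = 1 := by
    rw [← Real.exp_add]; simp
  calc F2 w g s = F2 w g s * Real.exp (-(S * s)) * Real.exp (S * s) := by
        rw [mul_assoc, he, mul_one]
    _ ≤ F2 w g 0 * Real.exp (S * s) := mul_le_mul_of_nonneg_right hanti hpos.le

lemma taylor_lower :
    F2 w g 0 * (Real.exp (-S) + S - 1) / S ^ 2 ≤ F w g 1 - F w g 0 - F1 w g 0 := by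
  set c := F2 w g 0 with hc
  have dexp : ∀ x : ℝ, HasDerivAt (fun t : ℝ => Real.exp (-(S * t)))
      (-S * Real.exp (-(S * x))) x := by
    intro x
    have h1 : HasDerivAt (fun t : ℝ => -(S * t)) (-S) x := by
      refine ((hasDerivAt_id x).const_mul S).neg.congr_deriv ?_; ring
    have := (Real.hasDerivAt_exp (-(S * x))).comp x h1
    refine this.congr_deriv ?_; ring
  have hphi' : ∀ x : ℝ, HasDerivAt
      (fun t => F1 w g t - F1 w g 0 - c * (1 - Real.exp (-(S * t))) / S)
      (F2 w g x - c * Real.exp (-(S * x))) x := by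
    intro x
    have h1 := hasDerivAt_F1 w g hw hW x
    have h2 : HasDerivAt (fun t : ℝ => c * (1 - Real.exp (-(S * t))) / S)
        (c * Real.exp (-(S * x))) x := by
      have h3 := (((dexp x).const_sub 1).const_mul c).div_const S
      refine h3.congr_deriv ?_
      field_simp
    exact (h1.sub_const _).sub h2
  have hstep1 : ∀ x : ℝ, 0 ≤ x →
      0 ≤ F1 w g x - F1 w g 0 - c * (1 - Real.exp (-(S * x))) / S := by
    intro x hx
    have := mono_aux hphi' (fun t ht => by
      have := gronwall_lower w g hw hW hS hg ht
      linarith) hx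
    simpa using this
  have hphi : ∀ x : ℝ, HasDerivAt
      (fun t => F w g t - F w g 0 - t * F1 w g 0
        - c * (Real.exp (-(S * t)) + S * t - 1) / S ^ 2)
      (F1 w g x - F1 w g 0 - c * (1 - Real.exp (-(S * x))) / S) x := by
    intro x
    have h1 := hasDerivAt_F w g hw hW x
    have h2 : HasDerivAt (fun t : ℝ => t * F1 w g 0) (F1 w g 0) x :=
      hasDerivAt_mul_const _
    have h3 : HasDerivAt (fun t : ℝ => c * (Real.exp (-(S * t)) + S * t - 1) / S ^ 2)
        (c * (1 - Real.exp (-(S * x))) / S) x := by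
      have hlin : HasDerivAt (fun t : ℝ => S * t) S x := by
        simpa [mul_comm] using (hasDerivAt_id x).const_mul S
      have h4 := ((((dexp x).add hlin).sub_const 1).const_mul c).div_const (S ^ 2)
      refine h4.congr_deriv ?_
      field_simp
      ring
    exact ((h1.sub_const _).sub h2).sub h3
  have hmono := mono_aux hphi (fun x hx => hstep1 x hx) zero_le_one
  simp only [Real.exp_zero, mul_zero, neg_zero, mul_one, zero_mul, one_mul] at hmono
  have hS2 : (0:ℝ) < S ^ 2 := by positivity
  norm_num at hmono
  linarith [hmono]

lemma taylor_upper :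
    F w g 1 - F w g 0 - F1 w g 0 ≤ F2 w g 0 * (Real.exp S - S - 1) / S ^ 2 := by
  set c := F2 w g 0 with hc
  have dexp : ∀ x : ℝ, HasDerivAt (fun t : ℝ => Real.exp (S * t))
      (S * Real.exp (S * x)) x := by
    intro x
    have h1 : HasDerivAt (fun t : ℝ => S * t) S x := by
      simpa [mul_comm] using (hasDerivAt_id x).const_mul S
    have := (Real.hasDerivAt_exp (S * x)).comp x h1
    refine this.congr_deriv ?_; ring
  have hphi' : ∀ x : ℝ, HasDerivAt
      (fun t => c * (Real.exp (S * t) - 1) / S - (F1 w g t - F1 w g 0))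
      (c * Real.exp (S * x) - F2 w g x) x := by
    intro x
    have h1 := hasDerivAt_F1 w g hw hW x
    have h2 : HasDerivAt (fun t : ℝ => c * (Real.exp (S * t) - 1) / S)
        (c * Real.exp (S * x)) x := by
      have h3 := (((dexp x).sub_const 1).const_mul c).div_const S
      refine h3.congr_deriv ?_
      field_simp
    exact h2.sub (h1.sub_const _)
  have hstep1 : ∀ x : ℝ, 0 ≤ x →
      0 ≤ c * (Real.exp (S * x) - 1) / S - (F1 w g x - F1 w g 0) := by
    intro x hx
    have := mono_aux hphi' (fun t ht => by
      have := gronwall_upper w g hw hW hS hg ht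
      linarith) hx
    simpa using this
  have hphi : ∀ x : ℝ, HasDerivAt
      (fun t => c * (Real.exp (S * t) - S * t - 1) / S ^ 2
        - (F w g t - F w g 0 - t * F1 w g 0))
      (c * (Real.exp (S * x) - 1) / S - (F1 w g x - F1 w g 0)) x := by
    intro x
    have h1 := hasDerivAt_F w g hw hW x
    have h2 : HasDerivAt (fun t : ℝ => t * F1 w g 0) (F1 w g 0) x :=
      hasDerivAt_mul_const _
    have h3 : HasDerivAt (fun t : ℝ => c * (Real.exp (S * t) - S * t - 1) / S ^ 2)
        (c * (Real.exp (S * x) - 1) / S) x := by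
      have hlin : HasDerivAt (fun t : ℝ => S * t) S x := by
        simpa [mul_comm] using (hasDerivAt_id x).const_mul S
      have h4 := ((((dexp x).sub hlin).sub_const 1).const_mul c).div_const (S ^ 2)
      refine h4.congr_deriv ?_
      field_simp
    exact h3.sub ((h1.sub_const _).sub h2)
  have hmono := mono_aux hphi (fun x hx => hstep1 x hx) zero_le_one
  simp only [Real.exp_zero, mul_zero, mul_one, zero_mul, one_mul] at hmono
  norm_num at hmono
  linarith [hmono]

lemma core_bounds :
    (∑ i, w i * (g i - (∑ j, w j * g j) / (∑ j, w j)) ^ 2) * (Real.exp (-S) + S - 1) / S ^ 2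
        ≤ (∑ i, w i) * Real.log ((∑ i, w i * Real.exp (g i)) / ∑ i, w i) - ∑ i, w i * g i ∧
      (∑ i, w i) * Real.log ((∑ i, w i * Real.exp (g i)) / ∑ i, w i) - ∑ i, w i * g i
        ≤ (∑ i, w i * (g i - (∑ j, w j * g j) / (∑ j, w j)) ^ 2) * (Real.exp S - S - 1) / S ^ 2 := by
  have hN0 : Nk w g 0 0 = ∑ i, w i := by simp [Nk]
  have hN1 : Nk w g 1 0 = ∑ i, w i * g i := by simp [Nk]
  have hNe : Nk w g 0 1 = ∑ i, w i * Real.exp (g i) := by simp [Nk]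
  have hApos : 0 < ∑ i, w i * Real.exp (g i) := by
    rw [← hNe]; exact Nk_pos w g hw hW 1
  have hF10 : F1 w g 0 = (∑ j, w j * g j) / (∑ j, w j) := by
    rw [F1, hN0, hN1]
  have hV : F2 w g 0 * (∑ i, w i)
      = ∑ i, w i * (g i - (∑ j, w j * g j) / (∑ j, w j)) ^ 2 := by
    have h := F2_mul w g hw hW 0
    rw [hN0, hF10] at h
    rw [h]
    exact Finset.sum_congr rfl fun i _ => by simp
  have hF1 : F w g 1 = Real.log (∑ i, w i * Real.exp (g i)) := by rw [F, hNe]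
  have hF0 : F w g 0 = Real.log (∑ i, w i) := by rw [F, hN0]
  have hlogdiv : Real.log ((∑ i, w i * Real.exp (g i)) / ∑ i, w i)
      = Real.log (∑ i, w i * Real.exp (g i)) - Real.log (∑ i, w i) :=
    Real.log_div hApos.ne' hW.ne'
  have hlow := taylor_lower w g hw hW hS hg
  have hup := taylor_upper w g hw hW hS hg
  rw [hF1, hF0, hF10] at hlow hup
  have hBW : (∑ i, w i) * ((∑ j, w j * g j) / (∑ j, w j)) = ∑ j, w j * g j := by
    field_simp
  constructor
  · have := mul_le_mul_of_nonneg_left hlow hW.le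
    rw [hlogdiv]
    calc (∑ i, w i * (g i - (∑ j, w j * g j) / (∑ j, w j)) ^ 2)
          * (Real.exp (-S) + S - 1) / S ^ 2
        = (∑ i, w i) * (F2 w g 0 * (Real.exp (-S) + S - 1) / S ^ 2) := by
          rw [← hV]; ring
      _ ≤ (∑ i, w i) * (Real.log (∑ i, w i * Real.exp (g i)) - Real.log (∑ i, w i)
            - (∑ j, w j * g j) / (∑ j, w j)) := this
      _ = (∑ i, w i) * (Real.log (∑ i, w i * Real.exp (g i)) - Real.log (∑ i, w i))
            - ∑ i, w i * g i := by rw [mul_sub, hBW]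
  · have := mul_le_mul_of_nonneg_left hup hW.le
    rw [hlogdiv]
    calc (∑ i, w i) * (Real.log (∑ i, w i * Real.exp (g i)) - Real.log (∑ i, w i))
          - ∑ i, w i * g i
        = (∑ i, w i) * (Real.log (∑ i, w i * Real.exp (g i)) - Real.log (∑ i, w i)
            - (∑ j, w j * g j) / (∑ j, w j)) := by linear_combination hBW
      _ ≤ (∑ i, w i) * (F2 w g 0 * (Real.exp S - S - 1) / S ^ 2) := this
      _ = (∑ i, w i * (g i - (∑ j, w j * g j) / (∑ j, w j)) ^ 2)
            * (Real.exp S - S - 1) / S ^ 2 := by rw [← hV]; ring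

omit hw hW hS hg

lemma pointwise (z a f : Fin n → ℝ) {S : ℝ} (hS : 0 < S)
    (hg : ∀ i, |f i - a i| ≤ S / 2) (t : ℝ) :
    (∑ i, ((f i - a i) - barG z a (fun j => f j - a j) t) ^ 2 *
        (if t ≤ z i then (1:ℝ) else 0) * Real.exp (a i)) * ((Real.exp (-S) + S - 1) / S ^ 2)
      ≤ (∑ i, Real.log (Real.exp (a i) * S0 z f t / (Real.exp (f i) * S0 z a t)) *
        (if t ≤ z i then (1:ℝ) else 0) * Real.exp (a i)) ∧
    (∑ i, Real.log (Real.exp (a i) * S0 z f t / (Real.exp (f i) * S0 z a t)) *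
        (if t ≤ z i then (1:ℝ) else 0) * Real.exp (a i))
      ≤ (∑ i, ((f i - a i) - barG z a (fun j => f j - a j) t) ^ 2 *
        (if t ≤ z i then (1:ℝ) else 0) * Real.exp (a i)) * ((Real.exp S - S - 1) / S ^ 2) := by
  classical
  set w : Fin n → ℝ := fun i => if t ≤ z i then Real.exp (a i) else 0 with hwdef
  set G : Fin n → ℝ := fun i => f i - a i with hGdef
  have hw : ∀ i, 0 ≤ w i := by
    intro i; dsimp [w]; split
    · exact (Real.exp_pos _).le
    · exact le_rfl
  by_cases hpos : 0 < ∑ i, w i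
  · have hS0a : S0 z a t = ∑ i, w i := rfl
    have hS0apos : 0 < S0 z a t := by rw [hS0a]; exact hpos
    have hS0f : S0 z f t = ∑ i, w i * Real.exp (G i) := by
      unfold S0
      refine Finset.sum_congr rfl fun i _ => ?_
      by_cases h : t ≤ z i
      · simp only [h, if_true, hwdef, hGdef, ← Real.exp_add]
        congr 1; ring
      · simp [h, hwdef]
    have hS0fpos : 0 < S0 z f t := by
      rw [hS0f]
      obtain ⟨j, -, hj⟩ : ∃ j ∈ Finset.univ, 0 < w j := by
        by_contra h
        push_neg at h
        have : ∑ i, w i ≤ 0 := Finset.sum_nonpos (fun i hi => h i hi)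
        linarith
      exact Finset.sum_pos' (fun i _ => mul_nonneg (hw i) (Real.exp_pos _).le)
        ⟨j, Finset.mem_univ j, mul_pos hj (Real.exp_pos _)⟩
    have hnum : (∑ i, G i * (if t ≤ z i then (1:ℝ) else 0) * Real.exp (a i))
        = ∑ i, w i * G i := by
      refine Finset.sum_congr rfl fun i _ => ?_
      by_cases h : t ≤ z i <;> simp [h, hwdef] <;> ring
    have hbar : barG z a G t = (∑ j, w j * G j) / (∑ j, w j) := by
      rw [barG, if_neg hS0apos.ne', hnum, hS0a]
    have hVt : (∑ i, (G i - barG z a G t) ^ 2 * (if t ≤ z i then (1:ℝ) else 0) *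
          Real.exp (a i))
        = ∑ i, w i * (G i - (∑ j, w j * G j) / (∑ j, w j)) ^ 2 := by
      rw [hbar]
      refine Finset.sum_congr rfl fun i _ => ?_
      by_cases h : t ≤ z i <;> simp [h, hwdef] <;> ring
    have hKt : (∑ i, Real.log (Real.exp (a i) * S0 z f t /
            (Real.exp (f i) * S0 z a t)) * (if t ≤ z i then (1:ℝ) else 0) * Real.exp (a i))
        = (∑ i, w i) * Real.log ((∑ i, w i * Real.exp (G i)) / ∑ i, w i)
          - ∑ i, w i * G i := by
      have hterm : ∀ i, Real.log (Real.exp (a i) * S0 z f t /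
            (Real.exp (f i) * S0 z a t)) * (if t ≤ z i then (1:ℝ) else 0) * Real.exp (a i)
          = w i * (Real.log (S0 z f t) - Real.log (S0 z a t)) - w i * G i := by
        intro i
        by_cases h : t ≤ z i
        · have harg : Real.exp (a i) * S0 z f t / (Real.exp (f i) * S0 z a t)
              = Real.exp (a i - f i) * (S0 z f t / S0 z a t) := by
            rw [Real.exp_sub]
            field_simp
          rw [harg, Real.log_mul (Real.exp_ne_zero _) (div_pos hS0fpos hS0apos).ne',
            Real.log_exp, Real.log_div hS0fpos.ne' hS0apos.ne']
          simp only [h, if_true, hwdef, hGdef]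
          ring
        · simp [h, hwdef]
      rw [Finset.sum_congr rfl fun i _ => hterm i, Finset.sum_sub_distrib,
        ← Finset.sum_mul, ← hS0f, ← hS0a, Real.log_div hS0fpos.ne' hS0apos.ne']
    have hg' : ∀ i, |G i| ≤ S / 2 := hg
    have hcore := core_bounds w G hw hpos hS hg'
    rw [hVt, hKt]
    constructor
    · calc (∑ i, w i * (G i - (∑ j, w j * G j) / (∑ j, w j)) ^ 2) *
            ((Real.exp (-S) + S - 1) / S ^ 2)
          = (∑ i, w i * (G i - (∑ j, w j * G j) / (∑ j, w j)) ^ 2) *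
            (Real.exp (-S) + S - 1) / S ^ 2 := by ring
        _ ≤ _ := hcore.1
    · calc (∑ i, w i) * Real.log ((∑ i, w i * Real.exp (G i)) / ∑ i, w i)
            - ∑ i, w i * G i
          ≤ (∑ i, w i * (G i - (∑ j, w j * G j) / (∑ j, w j)) ^ 2) *
            (Real.exp S - S - 1) / S ^ 2 := hcore.2
        _ = _ := by ring
  · have hsum0 : ∑ i, w i = 0 := le_antisymm (not_lt.mp hpos) (Finset.sum_nonneg fun i _ => hw i)
    have hw0 : ∀ i, w i = 0 := by
      intro i
      have := (Finset.sum_eq_zero_iff_of_nonneg fun i _ => hw i).mp hsum0 i (Finset.mem_univ i)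
      exact this
    have hite : ∀ i, ¬ t ≤ z i := by
      intro i h
      have := hw0 i
      simp only [hwdef, h, if_true] at this
      exact (Real.exp_ne_zero _) this
    simp [hite]

lemma measurable_S0 (z h : Fin n → ℝ) : Measurable (S0 z h) := by
  unfold S0
  exact Finset.measurable_sum _ fun i _ =>
    Measurable.ite measurableSet_Iic measurable_const measurable_const

lemma S0_nonneg (z h : Fin n → ℝ) (t : ℝ) : 0 ≤ S0 z h t :=
  Finset.sum_nonneg fun i _ => by
    split
    · exact (Real.exp_pos _).le
    · exact le_rfl

lemma S0_pos (z h : Fin n → ℝ) {t : ℝ} {i : Fin n} (hi : t ≤ z i) : 0 < S0 z h t := by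
  have h1 : Real.exp (h i) ≤ S0 z h t := by
    have := Finset.single_le_sum
      (f := fun j => if t ≤ z j then Real.exp (h j) else 0)
      (fun j _ => by split
                     · exact (Real.exp_pos _).le
                     · exact le_rfl)
      (Finset.mem_univ i)
    simp only [if_pos hi] at this
    exact this
  exact lt_of_lt_of_le (Real.exp_pos _) h1

lemma S0_ratio (z a f : Fin n → ℝ) {S : ℝ} (hg : ∀ i, f i - a i ≤ S / 2) (t : ℝ) :
    S0 z f t ≤ Real.exp (S / 2) * S0 z a t := by
  unfold S0
  rw [Finset.mul_sum]
  refine Finset.sum_le_sum fun i _ => ?_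
  by_cases h : t ≤ z i
  · simp only [h, if_true, ← Real.exp_add]
    exact Real.exp_le_exp.mpr (by linarith [hg i])
  · simp [h]

lemma abs_barG_le (z a G : Fin n → ℝ) {S : ℝ} (hS : 0 < S)
    (hg : ∀ i, |G i| ≤ S / 2) (t : ℝ) : |barG z a G t| ≤ S / 2 := by
  unfold barG
  split
  · simp; linarith
  · rename_i h
    have h0 : 0 < S0 z a t := lt_of_le_of_ne (S0_nonneg z a t) (Ne.symm h)
    rw [abs_div, abs_of_pos h0, div_le_iff₀ h0]
    refine (Finset.abs_sum_le_sum_abs _ _).trans ?_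
    have hrhs : S / 2 * S0 z a t
        = ∑ i, S / 2 * (if t ≤ z i then Real.exp (a i) else 0) := by
      unfold S0; rw [Finset.mul_sum]
    rw [hrhs]
    refine Finset.sum_le_sum fun i _ => ?_
    by_cases h' : t ≤ z i
    · simp only [h', if_true, mul_one, abs_mul, abs_of_nonneg (Real.exp_pos (a i)).le, abs_one]
      exact mul_le_mul_of_nonneg_right (by simpa using hg i) (Real.exp_pos _).le
    · simp [h']

lemma measurable_barG (z a G : Fin n → ℝ) : Measurable (barG z a G) := by
  unfold barG
  refine Measurable.ite ((measurable_S0 z a) (measurableSet_singleton 0))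
    measurable_const ?_
  exact (Finset.measurable_sum _ fun i _ =>
    ((Measurable.ite measurableSet_Iic measurable_const measurable_const).const_mul
      (G i)).mul_const _).div (measurable_S0 z a)

end KLAux


/-- with `S = 2 maxᵢ |fᵢ − aᵢ| > 0` and `ψ(u) = eᵘ − u − 1`,
`‖f − a‖ñ² ψ(−S)/S² ≤ KLₙ(a, f) ≤ ‖f − a‖ñ² ψ(S)/S²`. -/
theorem KL_selfconcordance_bounds (n : ℕ) (hn : 0 < n) (τ : ℝ) (hτ : 0 < τ)
    (z : Fin n → ℝ) (hz : ∀ i, 0 ≤ z i) (a f : Fin n → ℝ) (hfa : f ≠ a)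
    (lam : ℝ → ℝ) (hmeas : Measurable lam) (hpos : ∀ t, 0 ≤ lam t)
    (hint : IntervalIntegrable lam MeasureTheory.volume 0 τ)
    (S : ℝ)
    (hS : S = 2 * Finset.univ.sup'
      (Finset.univ_nonempty_iff.mpr (Fin.pos_iff_nonempty.mp hn))
      (fun i => |f i - a i|)) :
    normSqN τ z a lam (fun i => f i - a i) * (Real.exp (-S) + S - 1) / S ^ 2 ≤
        KLn τ z a lam f ∧
      KLn τ z a lam f ≤
        normSqN τ z a lam (fun i => f i - a i) * (Real.exp S - S - 1) / S ^ 2 := by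
  classical
  have hg : ∀ i, |f i - a i| ≤ S / 2 := by
    intro i
    have h1 : |f i - a i| ≤ Finset.univ.sup'
        (Finset.univ_nonempty_iff.mpr (Fin.pos_iff_nonempty.mp hn))
        (fun i => |f i - a i|) := Finset.le_sup' (fun i => |f i - a i|) (Finset.mem_univ i)
    rw [hS]; linarith
  have hSpos : 0 < S := by
    obtain ⟨i, hi⟩ : ∃ i, f i ≠ a i := Function.ne_iff.mp hfa
    have h1 : 0 < |f i - a i| := abs_pos.mpr (sub_ne_zero.mpr hi)
    have h2 := hg i
    linarith
  set G : Fin n → ℝ := fun i => f i - a i with hGdef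
  set K : Fin n → ℝ → ℝ := fun i t =>
    Real.log (Real.exp (a i) * S0 z f t / (Real.exp (f i) * S0 z a t)) *
      (if t ≤ z i then (1:ℝ) else 0) * lam t * Real.exp (a i) with hKdef
  set V : ℝ → ℝ := fun t =>
    (∑ i, (G i - barG z a G t) ^ 2 * (if t ≤ z i then (1:ℝ) else 0) *
      Real.exp (a i)) * lam t with hVdef
  have hKL : KLn τ z a lam f = (1 / (n:ℝ)) * ∑ i, ∫ t in (0:ℝ)..τ, K i t := rfl
  have hNS : normSqN τ z a lam G = (1 / (n:ℝ)) * ∫ t in (0:ℝ)..τ, V t := rfl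
  -- bounds on the log factor
  have hlog_bound : ∀ (i : Fin n) (t : ℝ), t ≤ z i →
      |Real.log (Real.exp (a i) * S0 z f t / (Real.exp (f i) * S0 z a t))| ≤ S := by
    intro i t h
    have hapos : 0 < S0 z a t := KLAux.S0_pos z a h
    have hfpos : 0 < S0 z f t := KLAux.S0_pos z f h
    have hargpos : 0 < Real.exp (a i) * S0 z f t / (Real.exp (f i) * S0 z a t) := by
      positivity
    have h1 : S0 z f t ≤ Real.exp (S / 2) * S0 z a t :=
      KLAux.S0_ratio z a f (fun j => (abs_le.mp (hg j)).2) t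
    have h2 : S0 z a t ≤ Real.exp (S / 2) * S0 z f t :=
      KLAux.S0_ratio z f a (fun j => by have := (abs_le.mp (hg j)).1; linarith) t
    have hfi : Real.exp (f i) ≤ Real.exp (S / 2) * Real.exp (a i) := by
      rw [← Real.exp_add]
      exact Real.exp_le_exp.mpr (by linarith [(abs_le.mp (hg i)).2])
    have hai : Real.exp (a i) ≤ Real.exp (S / 2) * Real.exp (f i) := by
      rw [← Real.exp_add]
      have := (abs_le.mp (hg i)).1
      exact Real.exp_le_exp.mpr (by linarith)
    have hee : Real.exp (S / 2) * Real.exp (S / 2) = Real.exp S := by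
      rw [← Real.exp_add]; norm_num
    rw [abs_le]
    constructor
    · rw [Real.le_log_iff_exp_le hargpos, le_div_iff₀ (by positivity)]
      have hmul : Real.exp (f i) * S0 z a t
          ≤ Real.exp S * (Real.exp (a i) * S0 z f t) := by
        calc Real.exp (f i) * S0 z a t
            ≤ (Real.exp (S / 2) * Real.exp (a i)) * (Real.exp (S / 2) * S0 z f t) :=
              mul_le_mul hfi h2 hapos.le (by positivity)
          _ = Real.exp S * (Real.exp (a i) * S0 z f t) := by rw [← hee]; ring
      calc Real.exp (-S) * (Real.exp (f i) * S0 z a t)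
          ≤ Real.exp (-S) * (Real.exp S * (Real.exp (a i) * S0 z f t)) :=
            mul_le_mul_of_nonneg_left hmul (Real.exp_pos _).le
        _ = Real.exp (a i) * S0 z f t := by
            rw [← mul_assoc, ← Real.exp_add]; norm_num
    · rw [Real.log_le_iff_le_exp hargpos, div_le_iff₀ (by positivity)]
      calc Real.exp (a i) * S0 z f t
          ≤ (Real.exp (S / 2) * Real.exp (f i)) * (Real.exp (S / 2) * S0 z a t) :=
            mul_le_mul hai h1 hfpos.le (by positivity)
        _ = Real.exp S * (Real.exp (f i) * S0 z a t) := by rw [← hee]; ring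
  -- measurability and integrability
  have hKmeas : ∀ i, Measurable (K i) := by
    intro i
    exact (((Real.measurable_log.comp
      ((measurable_const.mul (KLAux.measurable_S0 z f)).div
        (measurable_const.mul (KLAux.measurable_S0 z a)))).mul
      (Measurable.ite measurableSet_Iic measurable_const measurable_const)).mul
      hmeas).mul_const _
  have hKbound : ∀ i t, |K i t| ≤ S * Real.exp (a i) * lam t := by
    intro i t
    by_cases h : t ≤ z i
    · have hKt : K i t = Real.log (Real.exp (a i) * S0 z f t /
          (Real.exp (f i) * S0 z a t)) * lam t * Real.exp (a i) := by
        simp [hKdef, h]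
      rw [hKt, abs_mul, abs_mul, abs_of_nonneg (hpos t),
        abs_of_nonneg (Real.exp_pos (a i)).le]
      have hlb := hlog_bound i t h
      refine le_trans (mul_le_mul_of_nonneg_right
        (mul_le_mul_of_nonneg_right hlb (hpos t)) (Real.exp_pos (a i)).le)
        (le_of_eq (by ring))
    · have hKt : K i t = 0 := by simp [hKdef, h]
      rw [hKt, abs_zero]
      have := hpos t
      positivity
  have hKint : ∀ i, IntervalIntegrable (K i) volume 0 τ := by
    intro i
    refine (hint.const_mul (S * Real.exp (a i))).mono_fun
      ((hKmeas i).aestronglyMeasurable) ?_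
    refine MeasureTheory.ae_of_all _ fun t => ?_
    simp only [Real.norm_eq_abs]
    refine (hKbound i t).trans ?_
    rw [abs_of_nonneg (by have := hpos t; positivity)]
  have hVmeas : Measurable V := by
    refine Measurable.mul ?_ hmeas
    exact Finset.measurable_sum _ fun i _ =>
      (((measurable_const.sub (KLAux.measurable_barG z a G)).pow_const 2).mul
        (Measurable.ite measurableSet_Iic measurable_const measurable_const)).mul_const _
  have hVbound : ∀ t, |V t| ≤ (∑ i, S ^ 2 * Real.exp (a i)) * lam t := by
    intro t
    have hsum : |∑ i, (G i - barG z a G t) ^ 2 * (if t ≤ z i then (1:ℝ) else 0) *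
        Real.exp (a i)| ≤ ∑ i, S ^ 2 * Real.exp (a i) := by
      refine (Finset.abs_sum_le_sum_abs _ _).trans (Finset.sum_le_sum fun i _ => ?_)
      have hGb : |G i - barG z a G t| ≤ S := by
        have h1 := hg i
        have h2 := KLAux.abs_barG_le z a G hSpos hg t
        calc |G i - barG z a G t| ≤ |G i| + |barG z a G t| := abs_sub _ _
          _ ≤ S / 2 + S / 2 := add_le_add h1 h2
          _ = S := by ring
      have hsq : (G i - barG z a G t) ^ 2 ≤ S ^ 2 := by
        have := abs_le.mp hGb
        nlinarith [this.1, this.2]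
      by_cases h : t ≤ z i
      · simp only [h, if_true, mul_one]
        rw [abs_mul, abs_of_nonneg (Real.exp_pos (a i)).le, abs_of_nonneg (sq_nonneg _)]
        exact mul_le_mul_of_nonneg_right hsq (Real.exp_pos _).le
      · simp only [h, if_false, mul_zero, zero_mul, abs_zero]
        positivity
    rw [hVdef]
    rw [abs_mul, abs_of_nonneg (hpos t)]
    exact mul_le_mul_of_nonneg_right hsum (hpos t)
  have hVint : IntervalIntegrable V volume 0 τ := by
    refine (hint.const_mul (∑ i, S ^ 2 * Real.exp (a i))).mono_fun
      hVmeas.aestronglyMeasurable ?_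
    refine MeasureTheory.ae_of_all _ fun t => ?_
    simp only [Real.norm_eq_abs]
    refine (hVbound t).trans ?_
    have hVc : (0:ℝ) ≤ ∑ i, S ^ 2 * Real.exp (a i) :=
      Finset.sum_nonneg fun i _ => by positivity
    rw [abs_of_nonneg (mul_nonneg hVc (hpos t))]
  -- pointwise comparison
  have hKsum : ∀ t, ∑ i, K i t = (∑ i, Real.log (Real.exp (a i) * S0 z f t /
      (Real.exp (f i) * S0 z a t)) * (if t ≤ z i then (1:ℝ) else 0) *
      Real.exp (a i)) * lam t := by
    intro t
    rw [Finset.sum_mul]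
    exact Finset.sum_congr rfl fun i _ => by rw [hKdef]; ring
  have keyLow : ∀ t ∈ Set.Icc (0:ℝ) τ,
      V t * ((Real.exp (-S) + S - 1) / S ^ 2) ≤ ∑ i, K i t := by
    intro t _
    have h1 := (KLAux.pointwise z a f hSpos hg t).1
    rw [hKsum t, hVdef]
    calc (∑ i, (G i - barG z a G t) ^ 2 * (if t ≤ z i then (1:ℝ) else 0) *
          Real.exp (a i)) * lam t * ((Real.exp (-S) + S - 1) / S ^ 2)
        = (∑ i, (G i - barG z a G t) ^ 2 * (if t ≤ z i then (1:ℝ) else 0) *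
          Real.exp (a i)) * ((Real.exp (-S) + S - 1) / S ^ 2) * lam t := by ring
      _ ≤ _ := mul_le_mul_of_nonneg_right h1 (hpos t)
  have keyUp : ∀ t ∈ Set.Icc (0:ℝ) τ,
      (∑ i, K i t) ≤ V t * ((Real.exp S - S - 1) / S ^ 2) := by
    intro t _
    have h1 := (KLAux.pointwise z a f hSpos hg t).2
    rw [hKsum t, hVdef]
    calc (∑ i, Real.log (Real.exp (a i) * S0 z f t / (Real.exp (f i) * S0 z a t)) *
          (if t ≤ z i then (1:ℝ) else 0) * Real.exp (a i)) * lam t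
        ≤ (∑ i, (G i - barG z a G t) ^ 2 * (if t ≤ z i then (1:ℝ) else 0) *
          Real.exp (a i)) * ((Real.exp S - S - 1) / S ^ 2) * lam t :=
          mul_le_mul_of_nonneg_right h1 (hpos t)
      _ = _ := by ring
  have hKLeq : KLn τ z a lam f = (1 / (n:ℝ)) * ∫ t in (0:ℝ)..τ, ∑ i, K i t := by
    rw [hKL, intervalIntegral.integral_finset_sum (fun i _ => hKint i)]
  have hninv : (0:ℝ) ≤ 1 / (n:ℝ) := by positivity
  have hKsumInt : IntervalIntegrable (fun t => ∑ i, K i t) volume 0 τ := by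
    have h1 := IntervalIntegrable.sum (μ := volume) (a := (0:ℝ)) (b := τ)
      Finset.univ (fun i (_ : i ∈ Finset.univ) => hKint i)
    have h2 : (∑ i, K i) = fun t => ∑ i, K i t := by
      funext t
      simp [Finset.sum_apply]
    rwa [h2] at h1
  constructor
  · have e1 : normSqN τ z a lam G * (Real.exp (-S) + S - 1) / S ^ 2
        = (1 / (n:ℝ)) * ∫ t in (0:ℝ)..τ, V t * ((Real.exp (-S) + S - 1) / S ^ 2) := by
      rw [intervalIntegral.integral_mul_const, hNS]
      ring
    rw [e1, hKLeq]
    refine mul_le_mul_of_nonneg_left ?_ hninv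
    exact intervalIntegral.integral_mono_on hτ.le (hVint.mul_const _)
      hKsumInt keyLow
  · have e1 : normSqN τ z a lam G * (Real.exp S - S - 1) / S ^ 2
        = (1 / (n:ℝ)) * ∫ t in (0:ℝ)..τ, V t * ((Real.exp S - S - 1) / S ^ 2) := by
      rw [intervalIntegral.integral_mul_const, hNS]
      ring
    rw [e1, hKLeq]
    refine mul_le_mul_of_nonneg_left ?_ hninv
    exact intervalIntegral.integral_mono_on hτ.le
      hKsumInt (hVint.mul_const _) keyUp
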